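/- Riccati comparison: let s, f : [a, b] → ℝ be differentiable with f' + f² + 1 = 0, s' + s² + r = 0 where r : [a,b] → ℝ satisfies r ≥ 1, and suppose f(t₀) = s(t₀) for some t₀ ∈ [a, b]. Then s ≥ f on [a, t₀] and s ≤ f on [t₀, b]. -/

import Mathlib

open Real Set

/-- Riccati comparison: if `f' + f² + 1 = 0`, `s' + s² + r = 0` with `r ≥ 1` on `[a, b]`,
and `f t₀ = s t₀` for some `t₀ ∈ [a, b]`, then `s ≥ f` on `[a, t₀]` and `s ≤ f` on `[t₀, b]`. -/
theorem stmt_3 (a b t₀ : ℝ) (f s r : ℝ → ℝ) (hab : a ≤ b)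
    (ht₀ : t₀ ∈ Set.Icc a b)
    (hrc : ContinuousOn r (Set.Icc a b))
    (hr : ∀ t ∈ Set.Icc a b, 1 ≤ r t)
    (hf : ∀ t ∈ Set.Icc a b, HasDerivWithinAt f (-(f t ^ 2 + 1)) (Set.Icc a b) t)
    (hs : ∀ t ∈ Set.Icc a b, HasDerivWithinAt s (-(s t ^ 2 + r t)) (Set.Icc a b) t)
    (heq : f t₀ = s t₀) :
    (∀ t ∈ Set.Icc a t₀, f t ≤ s t) ∧ (∀ t ∈ Set.Icc t₀ b, s t ≤ f t) := by
  -- projection onto [a,b]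
  set p : ℝ → ℝ := fun t => max a (min b t) with hp
  have hpmem : ∀ t, p t ∈ Icc a b := fun t =>
    ⟨le_max_left _ _, max_le hab (min_le_left _ _)⟩
  have hpid : ∀ t ∈ Icc a b, p t = t := by
    intro t ht
    simp [hp, min_eq_right ht.2, max_eq_right ht.1]
  have hpc : Continuous p := by fun_prop
  have hsc : ContinuousOn s (Icc a b) := fun t ht => (hs t ht).continuousWithinAt
  have hfc : ContinuousOn f (Icc a b) := fun t ht => (hf t ht).continuousWithinAt
  -- extended integrand
  set φ : ℝ → ℝ := fun t => s (p t) + f (p t) with hφ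
  have hφc : Continuous φ := by
    have : Continuous fun t => (fun x => s x + f x) (p t) :=
      (hsc.add hfc).comp_continuous hpc hpmem
    exact this
  set F : ℝ → ℝ := fun t => ∫ x in t₀..t, φ x with hF
  have hFd : ∀ t, HasDerivAt F (φ t) t := fun t =>
    (hφc.integral_hasStrictDerivAt t₀ t).hasDerivAt
  -- the auxiliary function
  set h : ℝ → ℝ := fun t => (s t - f t) * Real.exp (F t) with hh
  have hhd : ∀ t ∈ Icc a b,
      HasDerivWithinAt h ((1 - r t) * Real.exp (F t)) (Icc a b) t := by
    intro t ht
    have hE : HasDerivWithinAt (fun u => Real.exp (F u))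
        (Real.exp (F t) * φ t) (Icc a b) t := ((hFd t).exp).hasDerivWithinAt
    have := (((hs t ht).fun_sub (hf t ht)).fun_mul hE)
    have hphi : φ t = s t + f t := by rw [hφ]; simp [hpid t ht]
    refine this.congr_deriv ?_
    rw [hphi]; ring
  have hhc : ContinuousOn h (Icc a b) :=
    (hsc.sub hfc).mul (Real.continuous_exp.comp (continuous_iff_continuousAt.mpr fun t => (hFd t).continuousAt)).continuousOn
  have hanti : AntitoneOn h (Icc a b) := by
    apply antitoneOn_of_hasDerivWithinAt_nonpos (convex_Icc a b) hhc
      (f' := fun t => (1 - r t) * Real.exp (F t))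
    · intro x hx
      rw [interior_Icc] at hx
      exact ((hhd x (Ioo_subset_Icc_self hx)).mono (by rw [interior_Icc]; exact Ioo_subset_Icc_self))
    · intro x hx
      rw [interior_Icc] at hx
      have h1 : 1 ≤ r x := hr x (Ioo_subset_Icc_self hx)
      nlinarith [Real.exp_pos (F x)]
  have hht₀ : h t₀ = 0 := by simp [hh, heq]
  constructor
  · intro t ht
    have htab : t ∈ Icc a b := ⟨ht.1, ht.2.trans ht₀.2⟩
    have := hanti htab ht₀ ht.2
    rw [hht₀] at this
    simp only [hh] at this
    nlinarith [Real.exp_pos (F t)]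
  · intro t ht
    have htab : t ∈ Icc a b := ⟨ht₀.1.trans ht.1, ht.2⟩
    have := hanti ht₀ htab ht.1
    rw [hht₀] at this
    simp only [hh] at this
    nlinarith [Real.exp_pos (F t)]
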